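/- Let X be a random vector in [0,∞)ᵈ indexing the edges of the complete graph Kₙ, and suppose that for every pair of disjoint edge sets S, T and every p > 0, P(∀s∈S X_s > p, ∀t∈T X_t ≤ p) ≤ e^{-a·p·|S|/M}·(b·p/σ)^{|T|} for constants a, b, M, σ > 0. Then the expected number of connected components of G_{X,p} with exactly k vertices is at most C(n,k)·k^{k-2}·e^{-a·p·k·(n-k)/M}·(b·p/σ)^{k-1}. -/

import Mathlib

open MeasureTheory

set_option linter.unusedSectionVars false

open Finset

namespace ECC

variable {α : Type*} [DecidableEq α] [LinearOrder α]

/-- `E` is the edge set of a spanning tree of the vertex set `V`. -/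
def IsSpTree (V : Finset α) (E : Finset (Sym2 α)) : Prop :=
  (∀ e ∈ E, ∀ x ∈ e, x ∈ V) ∧ (∀ e ∈ E, ¬ e.IsDiag) ∧ E.card + 1 = V.card ∧
  (∀ u ∈ V, ∀ v ∈ V, (SimpleGraph.fromEdgeSet (E : Set (Sym2 α))).Reachable u v)

def deg (E : Finset (Sym2 α)) (v : α) : ℕ := (E.filter (fun e => v ∈ e)).card

def leaves (V : Finset α) (E : Finset (Sym2 α)) : Finset α :=
  V.filter (fun v => deg E v = 1)

def nbrs (V : Finset α) (E : Finset (Sym2 α)) (v : α) : Finset α :=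
  V.filter (fun u => u ≠ v ∧ s(v,u) ∈ E)

lemma filter_mem_card_eq_two {V : Finset α} {e : Sym2 α} (hsub : ∀ x ∈ e, x ∈ V)
    (hnd : ¬ e.IsDiag) : (V.filter (fun x => x ∈ e)).card = 2 := by
  induction e with
  | _ a b =>
    have hab : a ≠ b := by simpa [Sym2.mk_isDiag_iff] using hnd
    have : V.filter (fun x => x ∈ s(a,b)) = {a, b} := by
      ext x
      simp only [mem_filter, Sym2.mem_iff, mem_insert, mem_singleton]
      constructor
      · rintro ⟨-, h⟩; exact h
      · rintro (rfl | rfl)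
        · exact ⟨hsub _ (by simp), Or.inl rfl⟩
        · exact ⟨hsub _ (by simp), Or.inr rfl⟩
    rw [this, Finset.card_pair hab]

lemma sum_deg {V : Finset α} {E : Finset (Sym2 α)} (hsub : ∀ e ∈ E, ∀ x ∈ e, x ∈ V)
    (hnd : ∀ e ∈ E, ¬ e.IsDiag) : ∑ v ∈ V, deg E v = 2 * E.card := by
  have : ∑ v ∈ V, deg E v = ∑ e ∈ E, (V.filter (fun x => x ∈ e)).card := by
    simp only [deg, Finset.card_filter]
    rw [Finset.sum_comm]
  rw [this]
  rw [Finset.sum_congr rfl (fun e he => filter_mem_card_eq_two (hsub e he) (hnd e he))]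
  simp [Finset.sum_const, mul_comm]

lemma deg_pos {V : Finset α} {E : Finset (Sym2 α)} (h : IsSpTree V E)
    (h2 : 2 ≤ V.card) {v : α} (hv : v ∈ V) : 1 ≤ deg E v := by
  obtain ⟨u, hu, hne⟩ := Finset.exists_mem_ne (by omega : 1 < V.card) v
  obtain ⟨w⟩ := h.2.2.2 v hv u hu
  cases w with
  | nil => exact absurd rfl hne.symm
  | cons hadj w' =>
    rw [SimpleGraph.fromEdgeSet_adj] at hadj
    have : s(v, _) ∈ E.filter (fun e => v ∈ e) :=
      Finset.mem_filter.2 ⟨hadj.1, by simp⟩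
    exact Finset.card_pos.2 ⟨_, this⟩

lemma exists_leaf {V : Finset α} {E : Finset (Sym2 α)} (h : IsSpTree V E)
    (h2 : 2 ≤ V.card) : (leaves V E).Nonempty := by
  by_contra hL
  have hall : ∀ v ∈ V, 2 ≤ deg E v := by
    intro v hv
    have h1 : 1 ≤ deg E v := deg_pos h h2 hv
    have : deg E v ≠ 1 := by
      intro hdeg
      exact hL ⟨v, Finset.mem_filter.2 ⟨hv, hdeg⟩⟩
    omega
  have hsum : 2 * V.card ≤ ∑ v ∈ V, deg E v := by
    calc 2 * V.card = ∑ _v ∈ V, 2 := by simp [mul_comm]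
    _ ≤ ∑ v ∈ V, deg E v := Finset.sum_le_sum hall
  rw [sum_deg h.1 h.2.1] at hsum
  have := h.2.2.1
  omega

lemma unique_edge {E : Finset (Sym2 α)} {v : α} (hdeg : deg E v = 1)
    {e₀ : Sym2 α} (he₀ : e₀ ∈ E) (hve₀ : v ∈ e₀) :
    ∀ e ∈ E, v ∈ e → e = e₀ := by
  intro e he hve
  have h1 : (E.filter (fun e => v ∈ e)).card ≤ 1 := le_of_eq hdeg
  exact Finset.card_le_one.1 h1 e (Finset.mem_filter.2 ⟨he, hve⟩) e₀
    (Finset.mem_filter.2 ⟨he₀, hve₀⟩)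

lemma leaf_struct {V : Finset α} {E : Finset (Sym2 α)} (h : IsSpTree V E)
    {v : α} (hv : v ∈ V) (hdeg : deg E v = 1) :
    ∃ u, u ∈ V ∧ u ≠ v ∧ s(v,u) ∈ E ∧ nbrs V E v = {u} ∧
      (∀ e ∈ E, v ∈ e → e = s(v,u)) := by
  obtain ⟨e₀, he₀⟩ := Finset.card_eq_one.1 hdeg
  have he₀m : e₀ ∈ E.filter (fun e => v ∈ e) := by rw [he₀]; exact Finset.mem_singleton_self _
  have he₀E : e₀ ∈ E := (Finset.mem_filter.1 he₀m).1
  have hve₀ : v ∈ e₀ := (Finset.mem_filter.1 he₀m).2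
  obtain ⟨u, rfl⟩ := Sym2.mem_iff_exists.1 hve₀
  have hune : u ≠ v := by
    intro huv
    exact h.2.1 _ he₀E (by simp [Sym2.mk_isDiag_iff, huv])
  have huV : u ∈ V := h.1 _ he₀E u (by simp)
  have huniq : ∀ e ∈ E, v ∈ e → e = s(v,u) := unique_edge hdeg he₀E hve₀
  refine ⟨u, huV, hune, he₀E, ?_, huniq⟩
  ext w
  simp only [nbrs, mem_filter, mem_singleton]
  constructor
  · rintro ⟨hwV, hwv, hwe⟩
    have := huniq _ hwe (by simp)
    rw [Sym2.congr_right] at this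
    exact this
  · rintro rfl
    exact ⟨huV, hune, he₀E⟩

/-- The neighbour of a leaf is not itself a leaf (when there are ≥ 3 vertices). -/
lemma nbr_not_leaf {V : Finset α} {E : Finset (Sym2 α)} (h : IsSpTree V E)
    (h3 : 3 ≤ V.card) {v u : α} (hv : v ∈ V) (hdegv : deg E v = 1)
    (hvu : s(v,u) ∈ E) (huniq : ∀ e ∈ E, v ∈ e → e = s(v,u)) :
    deg E u ≠ 1 := by
  intro hdegu
  have huniq' : ∀ e ∈ E, u ∈ e → e = s(v,u) := unique_edge hdegu hvu (by simp)
  -- every walk starting in {u,v} stays in {u,v}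
  have key : ∀ x y : α, (SimpleGraph.fromEdgeSet (E : Set (Sym2 α))).Walk x y →
      (x = u ∨ x = v) → (y = u ∨ y = v) := by
    intro x y w
    induction w with
    | nil => exact fun h => h
    | cons hadj w' ih =>
      rename_i x' z' y'
      intro hx
      rw [SimpleGraph.fromEdgeSet_adj] at hadj
      apply ih
      rcases hx with rfl | rfl
      · have := huniq' _ hadj.1 (by simp)
        have hz : z' ∈ s(x', z') := by simp
        rw [this] at hz
        rcases Sym2.mem_iff.1 hz with h1 | h1
        · exact Or.inr h1
        · exact Or.inl h1
      · have := huniq _ hadj.1 (by simp)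
        have hz : z' ∈ s(x', z') := by simp
        rw [this] at hz
        rcases Sym2.mem_iff.1 hz with h1 | h1
        · exact Or.inr h1
        · exact Or.inl h1
  have hVsub : ¬ V ⊆ {u, v} := by
    intro hsub
    have h1 := Finset.card_le_card hsub
    have h2 : ({u, v} : Finset α).card ≤ 2 := by
      apply le_trans (Finset.card_insert_le _ _); simp
    omega
  obtain ⟨w, hwV, hw⟩ := Finset.not_subset.1 hVsub
  obtain ⟨wk⟩ := h.2.2.2 v hv w hwV
  have := key v w wk (Or.inr rfl)
  simp only [Finset.mem_insert, Finset.mem_singleton] at hw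
  tauto

/-- Removing a leaf preserves being a spanning tree. -/
lemma sptree_erase {V : Finset α} {E : Finset (Sym2 α)} (h : IsSpTree V E)
    {v u : α} (hv : v ∈ V) (hune : u ≠ v)
    (hvu : s(v,u) ∈ E) (huniq : ∀ e ∈ E, v ∈ e → e = s(v,u)) :
    IsSpTree (V.erase v) (E.erase s(v,u)) := by
  have hEpos : 0 < E.card := Finset.card_pos.2 ⟨_, hvu⟩
  have hnotv : ∀ e ∈ E.erase s(v,u), v ∉ e := by
    intro e he hve
    exact (Finset.mem_erase.1 he).1 (huniq _ (Finset.mem_erase.1 he).2 hve)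
  refine ⟨?_, ?_, ?_, ?_⟩
  · intro e he x hx
    refine Finset.mem_erase.2 ⟨?_, h.1 _ (Finset.mem_erase.1 he).2 x hx⟩
    rintro rfl
    exact hnotv e he hx
  · exact fun e he => h.2.1 e (Finset.mem_erase.1 he).2
  · rw [Finset.card_erase_of_mem hvu, Finset.card_erase_of_mem hv]
    have := h.2.2.1
    omega
  · -- connectivity
    set G := SimpleGraph.fromEdgeSet (E : Set (Sym2 α)) with hG
    set G' := SimpleGraph.fromEdgeSet ((E.erase s(v,u) : Finset (Sym2 α)) : Set (Sym2 α)) with hG'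
    set f : α → α := fun x => if x = v then u else x with hf
    have key : ∀ x y : α, G.Walk x y → G'.Reachable (f x) (f y) := by
      intro x y w
      induction w with
      | nil => exact SimpleGraph.Reachable.refl _
      | cons hadj w' ih =>
        rename_i x' z' y'
        refine SimpleGraph.Reachable.trans ?_ ih
        rw [hG, SimpleGraph.fromEdgeSet_adj] at hadj
        by_cases hx : x' = v
        · subst hx
          have := huniq _ hadj.1 (by simp)
          rw [Sym2.congr_right] at this
          subst this
          have : f x' = f z' := by simp [hf, hadj.2.symm, hune]
          rw [this]
        · by_cases hz : z' = v
          · subst hz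
            have := huniq _ hadj.1 (by simp)
            have hx'u : x' = u := by
              have hx'mem : x' ∈ s(x', z') := by simp
              rw [this] at hx'mem
              rcases Sym2.mem_iff.1 hx'mem with h1 | h1
              · exact absurd h1 hx
              · exact h1
            have : f x' = f z' := by simp [hf, hx, hx'u]
            rw [this]
          · have hne : s(x', z') ≠ s(v, u) := by
              intro heq
              have : v ∈ s(x', z') := heq ▸ (by simp)
              rcases Sym2.mem_iff.1 this with h1 | h1
              · exact hx h1.symm
              · exact hz h1.symm
            have : G'.Adj x' z' := by
              rw [hG', SimpleGraph.fromEdgeSet_adj]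
              exact ⟨Finset.mem_coe.2 (Finset.mem_erase.2 ⟨hne, hadj.1⟩), hadj.2⟩
            have hfx : f x' = x' := by simp [hf, hx]
            have hfz : f z' = z' := by simp [hf, hz]
            rw [hfx, hfz]
            exact this.reachable
    intro x hx y hy
    have hx' : f x = x := by simp [hf, (Finset.mem_erase.1 hx).1]
    have hy' : f y = y := by simp [hf, (Finset.mem_erase.1 hy).1]
    obtain ⟨w⟩ := h.2.2.2 x (Finset.mem_erase.1 hx).2 y (Finset.mem_erase.1 hy).2
    have := key x y w
    rwa [hx', hy'] at this

/-- Prüfer code of a spanning tree, with fuel. -/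
def pcode : ℕ → Finset α → Finset (Sym2 α) → List α
  | 0, _, _ => []
  | (fuel+1), V, E =>
    if hL : 3 ≤ V.card ∧ (leaves V E).Nonempty then
      let v := (leaves V E).min' hL.2
      if hN : (nbrs V E v).Nonempty then
        let u := (nbrs V E v).min' hN
        u :: pcode fuel (V.erase v) (E.erase s(v,u))
      else []
    else []

lemma pcode_nil {V : Finset α} {E : Finset (Sym2 α)} (h3 : ¬ 3 ≤ V.card) (fuel : ℕ) :
    pcode fuel V E = [] := by
  cases fuel with
  | zero => rfl
  | succ f =>
    rw [pcode, dif_neg]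
    rintro ⟨h, -⟩
    exact h3 h

/-- The main step lemma: structure of one step of the Prüfer code. -/
lemma pcode_step {V : Finset α} {E : Finset (Sym2 α)} (h : IsSpTree V E)
    (h3 : 3 ≤ V.card) :
    ∃ v u : α, v ∈ V ∧ deg E v = 1 ∧ u ∈ V ∧ u ≠ v ∧ s(v,u) ∈ E ∧ deg E u ≠ 1 ∧
      IsSpTree (V.erase v) (E.erase s(v,u)) ∧
      (∀ x ∈ V, x ≠ v → x ≠ u → deg (E.erase s(v,u)) x = deg E x) ∧
      (∀ hL : (leaves V E).Nonempty, v = (leaves V E).min' hL) ∧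
      (∀ fuel, pcode (fuel+1) V E = u :: pcode fuel (V.erase v) (E.erase s(v,u))) := by
  have hL : (leaves V E).Nonempty := exists_leaf h (by omega)
  set v := (leaves V E).min' hL with hvdef
  have hvmem := Finset.min'_mem (leaves V E) hL
  rw [← hvdef] at hvmem
  have hvV : v ∈ V := (Finset.mem_filter.1 hvmem).1
  have hvdeg : deg E v = 1 := (Finset.mem_filter.1 hvmem).2
  obtain ⟨u, huV, hune, hvuE, hnbrs, huniq⟩ := leaf_struct h hvV hvdeg
  refine ⟨v, u, hvV, hvdeg, huV, hune, hvuE, ?_, ?_, ?_, ?_, ?_⟩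
  · exact nbr_not_leaf h h3 hvV hvdeg hvuE huniq
  · exact sptree_erase h hvV hune hvuE huniq
  · intro x hx hxv hxu
    unfold deg
    congr 1
    ext e
    simp only [Finset.mem_filter, Finset.mem_erase]
    constructor
    · rintro ⟨⟨-, he⟩, hxe⟩; exact ⟨he, hxe⟩
    · rintro ⟨he, hxe⟩
      refine ⟨⟨?_, he⟩, hxe⟩
      rintro rfl
      rcases Sym2.mem_iff.1 hxe with h1 | h1
      · exact hxv h1
      · exact hxu h1
  · intro hL'; rfl
  · intro fuel
    rw [pcode, dif_pos ⟨h3, hL⟩]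
    have hN : (nbrs V E v).Nonempty := by rw [hnbrs]; exact ⟨u, Finset.mem_singleton_self u⟩
    rw [dif_pos hN]
    have humin : (nbrs V E v).min' hN = u :=
      (Finset.eq_singleton_iff_unique_mem.1 hnbrs).2 _ (Finset.min'_mem _ _)
    show (nbrs V E v).min' hN :: pcode fuel (V.erase v) (E.erase s(v, (nbrs V E v).min' hN)) = _
    simp only [humin]

lemma pcode_subset : ∀ (fuel : ℕ) (V : Finset α) (E : Finset (Sym2 α)), IsSpTree V E →
    ∀ x ∈ pcode fuel V E, x ∈ V := by
  intro fuel
  induction fuel with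
  | zero => intro V E _ x hx; simp [pcode] at hx
  | succ f ih =>
    intro V E h x hx
    by_cases h3 : 3 ≤ V.card
    · obtain ⟨v, u, hvV, -, huV, -, -, -, htree, -, -, hcode⟩ := pcode_step h h3
      rw [hcode f] at hx
      rcases List.mem_cons.1 hx with rfl | hx
      · exact huV
      · exact Finset.mem_of_mem_erase (ih _ _ htree x hx)
    · rw [pcode_nil h3] at hx
      simp at hx

lemma pcode_length : ∀ (fuel : ℕ) (V : Finset α) (E : Finset (Sym2 α)), IsSpTree V E →
    2 ≤ V.card → V.card ≤ fuel + 2 → (pcode fuel V E).length = V.card - 2 := by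
  intro fuel
  induction fuel with
  | zero =>
    intro V E _ h2 hle
    have : V.card = 2 := by omega
    rw [pcode_nil (by omega)]
    simp [this]
  | succ f ih =>
    intro V E h h2 hle
    by_cases h3 : 3 ≤ V.card
    · obtain ⟨v, u, hvV, -, -, -, -, -, htree, -, -, hcode⟩ := pcode_step h h3
      rw [hcode f]
      have hcard : (V.erase v).card = V.card - 1 := Finset.card_erase_of_mem hvV
      rw [List.length_cons, ih _ _ htree (by omega) (by omega), hcard]
      omega
    · rw [pcode_nil h3]
      have : V.card = 2 := by omega
      simp [this]

lemma base_two {V : Finset α} {E : Finset (Sym2 α)} (h : IsSpTree V E)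
    (h2 : V.card = 2) : ∃ a b : α, a ≠ b ∧ V = {a, b} ∧ E = {s(a,b)} := by
  obtain ⟨a, b, hab, hV⟩ := Finset.card_eq_two.1 h2
  have hE1 : E.card = 1 := by have := h.2.2.1; omega
  obtain ⟨e, hE⟩ := Finset.card_eq_one.1 hE1
  have heE : e ∈ E := by rw [hE]; exact Finset.mem_singleton_self _
  have hesub := h.1 e heE
  have hend := h.2.1 e heE
  refine ⟨a, b, hab, hV, ?_⟩
  rw [hE]
  congr 1
  induction e with
  | _ x y =>
    have hxy : x ≠ y := by simpa [Sym2.mk_isDiag_iff] using hend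
    have hx : x ∈ V := hesub x (by simp)
    have hy : y ∈ V := hesub y (by simp)
    rw [hV] at hx hy
    simp only [Finset.mem_insert, Finset.mem_singleton] at hx hy
    rw [Sym2.eq_iff]
    rcases hx with rfl | rfl
    · rcases hy with rfl | rfl
      · exact absurd rfl hxy
      · exact Or.inl ⟨rfl, rfl⟩
    · rcases hy with rfl | rfl
      · exact Or.inr ⟨rfl, rfl⟩
      · exact absurd rfl hxy

lemma deg_base_two {V : Finset α} {E : Finset (Sym2 α)} (h : IsSpTree V E)
    (h2 : V.card = 2) : ∀ x ∈ V, deg E x = 1 := by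
  obtain ⟨a, b, hab, hV, hE⟩ := base_two h h2
  intro x hx
  rw [hV] at hx
  simp only [Finset.mem_insert, Finset.mem_singleton] at hx
  unfold deg
  rw [hE]
  rcases hx with rfl | rfl
  · rw [Finset.filter_singleton, if_pos (by simp)]; rfl
  · rw [Finset.filter_singleton, if_pos (by simp)]; rfl

/-- Entries of the Prüfer code are exactly the non-leaves. -/
lemma mem_pcode_iff : ∀ (fuel : ℕ) (V : Finset α) (E : Finset (Sym2 α)), IsSpTree V E →
    2 ≤ V.card → V.card ≤ fuel + 2 → ∀ x ∈ V, (x ∈ pcode fuel V E ↔ deg E x ≠ 1) := by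
  intro fuel
  induction fuel with
  | zero =>
    intro V E h h2 hle x hx
    have h2' : V.card = 2 := by omega
    rw [pcode_nil (by omega)]
    simp [deg_base_two h h2' x hx]
  | succ f ih =>
    intro V E h h2 hle x hx
    by_cases h3 : 3 ≤ V.card
    · obtain ⟨v, u, hvV, hvdeg, huV, hune, hvuE, hudeg, htree, hdegpres, -, hcode⟩ :=
        pcode_step h h3
      rw [hcode f]
      by_cases hxv : x = v
      · subst hxv
        simp only [List.mem_cons]
        constructor
        · rintro (rfl | hmem)
          · exact absurd rfl hune
          · exact absurd (pcode_subset f _ _ htree _ hmem) (by simp)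
        · intro hd; exact absurd hvdeg hd
      · by_cases hxu : x = u
        · subst hxu
          simp only [List.mem_cons]
          constructor
          · intro _; exact hudeg
          · intro _; exact Or.inl trivial
        · have hxV' : x ∈ V.erase v := Finset.mem_erase.2 ⟨hxv, hx⟩
          have hcard : (V.erase v).card = V.card - 1 := Finset.card_erase_of_mem hvV
          have := ih _ _ htree (by omega) (by omega) x hxV'
          rw [hdegpres x hx hxv hxu] at this
          simp only [List.mem_cons]
          constructor
          · rintro (rfl | hmem)
            · exact absurd rfl hxu
            · exact this.1 hmem
          · intro hd; exact Or.inr (this.2 hd)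
    · have h2' : V.card = 2 := by omega
      rw [pcode_nil h3]
      simp [deg_base_two h h2' x hx]

/-- Injectivity of the Prüfer code. -/
lemma pcode_inj : ∀ (fuel : ℕ) (V : Finset α) (E₁ E₂ : Finset (Sym2 α)),
    IsSpTree V E₁ → IsSpTree V E₂ → V.card ≤ fuel + 2 →
    pcode fuel V E₁ = pcode fuel V E₂ → E₁ = E₂ := by
  intro fuel
  induction fuel with
  | zero =>
    intro V E₁ E₂ h₁ h₂ hle _
    interval_cases h : V.card
    · exact absurd h₁.2.2.1 (by omega)
    · rw [Finset.card_eq_zero.1 (by have := h₁.2.2.1; omega : E₁.card = 0),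
        Finset.card_eq_zero.1 (by have := h₂.2.2.1; omega : E₂.card = 0)]
    · obtain ⟨a, b, hab, hV₁, hE₁⟩ := base_two h₁ h
      obtain ⟨a', b', hab', hV₂, hE₂⟩ := base_two h₂ h
      rw [hE₁, hE₂]
      rw [hV₁] at hV₂
      have ha' : a' ∈ ({a, b} : Finset α) := hV₂ ▸ Finset.mem_insert_self a' {b'}
      have hb' : b' ∈ ({a, b} : Finset α) := hV₂ ▸ by simp
      simp only [Finset.mem_insert, Finset.mem_singleton] at ha' hb'
      congr 1
      rw [Sym2.eq_iff]
      rcases ha' with rfl | rfl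
      · rcases hb' with rfl | rfl
        · exact absurd rfl hab'
        · exact Or.inl ⟨rfl, rfl⟩
      · rcases hb' with rfl | rfl
        · exact Or.inr ⟨rfl, rfl⟩
        · exact absurd rfl hab'
  | succ f ih =>
    intro V E₁ E₂ h₁ h₂ hle hcodes
    by_cases h3 : 3 ≤ V.card
    · obtain ⟨v₁, u₁, hv₁V, hv₁deg, hu₁V, hu₁ne, hvu₁E, -, htree₁, -, hmin₁, hcode₁⟩ :=
        pcode_step h₁ h3
      obtain ⟨v₂, u₂, hv₂V, hv₂deg, hu₂V, hu₂ne, hvu₂E, -, htree₂, -, hmin₂, hcode₂⟩ :=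
        pcode_step h₂ h3
      -- the leaf sets agree
      have hleaves : leaves V E₁ = leaves V E₂ := by
        ext x
        simp only [leaves, Finset.mem_filter]
        constructor
        · rintro ⟨hxV, hxdeg⟩
          refine ⟨hxV, ?_⟩
          by_contra hne
          have h1 := (mem_pcode_iff (f+1) V E₂ h₂ (by omega) (by omega) x hxV).2 hne
          rw [← hcodes] at h1
          exact absurd ((mem_pcode_iff (f+1) V E₁ h₁ (by omega) (by omega) x hxV).1 h1)
            (by simpa using hxdeg)
        · rintro ⟨hxV, hxdeg⟩
          refine ⟨hxV, ?_⟩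
          by_contra hne
          have h1 := (mem_pcode_iff (f+1) V E₁ h₁ (by omega) (by omega) x hxV).2 hne
          rw [hcodes] at h1
          exact absurd ((mem_pcode_iff (f+1) V E₂ h₂ (by omega) (by omega) x hxV).1 h1)
            (by simpa using hxdeg)
      have hL₁ : (leaves V E₁).Nonempty := exists_leaf h₁ (by omega)
      have hL₂ : (leaves V E₂).Nonempty := exists_leaf h₂ (by omega)
      have hveq : v₁ = v₂ := by
        rw [hmin₁ hL₁, hmin₂ hL₂]
        apply le_antisymm
        · apply Finset.min'_le
          rw [hleaves]; exact Finset.min'_mem _ _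
        · apply Finset.min'_le
          rw [← hleaves]; exact Finset.min'_mem _ _
      subst hveq
      rw [hcode₁ f, hcode₂ f] at hcodes
      obtain ⟨hueq, htails⟩ := List.cons.inj hcodes
      subst hueq
      have hcard : (V.erase v₁).card = V.card - 1 := Finset.card_erase_of_mem hv₁V
      have hE' := ih (V.erase v₁) _ _ htree₁ htree₂ (by omega) htails
      have h₁' : E₁ = insert s(v₁,u₁) (E₁.erase s(v₁,u₁)) := (Finset.insert_erase hvu₁E).symm
      rw [h₁', hE', Finset.insert_erase hvu₂E]
    · -- V.card = 2 exactly, or less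
      have h2' : V.card ≤ 2 := by omega
      interval_cases h : V.card
      · exact absurd h₁.2.2.1 (by omega)
      · rw [Finset.card_eq_zero.1 (by have := h₁.2.2.1; omega : E₁.card = 0),
          Finset.card_eq_zero.1 (by have := h₂.2.2.1; omega : E₂.card = 0)]
      · obtain ⟨a, b, hab, hV₁, hE₁⟩ := base_two h₁ h
        obtain ⟨a', b', hab', hV₂, hE₂⟩ := base_two h₂ h
        rw [hE₁, hE₂]
        rw [hV₁] at hV₂
        have ha' : a' ∈ ({a, b} : Finset α) := hV₂ ▸ Finset.mem_insert_self a' {b'}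
        have hb' : b' ∈ ({a, b} : Finset α) := hV₂ ▸ by simp
        simp only [Finset.mem_insert, Finset.mem_singleton] at ha' hb'
        congr 1
        rw [Sym2.eq_iff]
        rcases ha' with rfl | rfl
        · rcases hb' with rfl | rfl
          · exact absurd rfl hab'
          · exact Or.inl ⟨rfl, rfl⟩
        · rcases hb' with rfl | rfl
          · exact Or.inr ⟨rfl, rfl⟩
          · exact absurd rfl hab'

lemma sptree_eq_of_card_le_two {V : Finset α} (hV : V.card ≤ 2)
    {E₁ E₂ : Finset (Sym2 α)} (h₁ : IsSpTree V E₁) (h₂ : IsSpTree V E₂) : E₁ = E₂ :=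
  pcode_inj 0 V E₁ E₂ h₁ h₂ (by omega) rfl

lemma card_spTrees_le [Fintype α] (V : Finset α)
    [DecidablePred (fun E : Finset (Sym2 α) => IsSpTree V E)] :
    (Finset.univ.filter (fun E : Finset (Sym2 α) => IsSpTree V E)).card
      ≤ V.card ^ (V.card - 2) := by
  by_cases h2 : V.card ≤ 2
  · have hd : V.card - 2 = 0 := by omega
    rw [hd, pow_zero]
    apply Finset.card_le_one.2
    intro E₁ hE₁ E₂ hE₂
    exact sptree_eq_of_card_le_two h2 (Finset.mem_filter.1 hE₁).2 (Finset.mem_filter.1 hE₂).2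
  · push_neg at h2
    have hV : V.Nonempty := Finset.card_pos.1 (by omega)
    have key := Finset.card_le_card_of_injOn
      (f := fun E : Finset (Sym2 α) =>
        (fun i : Fin (V.card - 2) => (pcode V.card V E).getD i (V.min' hV)))
      (s := Finset.univ.filter (fun E : Finset (Sym2 α) => IsSpTree V E))
      (t := Fintype.piFinset (fun _ : Fin (V.card - 2) => V))
      (by
        intro E hE
        rw [Finset.mem_coe, Fintype.mem_piFinset]
        intro i
        have hsp : IsSpTree V E := (Finset.mem_filter.1 hE).2
        have hlen : (pcode V.card V E).length = V.card - 2 :=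
          pcode_length _ _ _ hsp (by omega) (by omega)
        have hi : (i : ℕ) < (pcode V.card V E).length := by rw [hlen]; exact i.2
        show (pcode V.card V E).getD i (V.min' hV) ∈ V
        rw [List.getD_eq_getElem _ _ hi]
        exact pcode_subset _ _ _ hsp _ (List.getElem_mem _))
      (by
        intro E₁ h₁ E₂ h₂ hfeq
        simp only [Finset.coe_filter, Set.mem_setOf_eq] at h₁ h₂
        apply pcode_inj V.card V E₁ E₂ h₁.2 h₂.2 (by omega)
        have hlen₁ : (pcode V.card V E₁).length = V.card - 2 :=
          pcode_length _ _ _ h₁.2 (by omega) (by omega)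
        have hlen₂ : (pcode V.card V E₂).length = V.card - 2 :=
          pcode_length _ _ _ h₂.2 (by omega) (by omega)
        apply List.ext_getElem (by rw [hlen₁, hlen₂])
        intro m hm₁ hm₂
        have hfi := congrFun hfeq ⟨m, by rw [hlen₁] at hm₁; exact hm₁⟩
        simpa only [List.getD_eq_getElem _ _ hm₁, List.getD_eq_getElem _ _ hm₂] using hfi)
    calc (Finset.univ.filter (fun E : Finset (Sym2 α) => IsSpTree V E)).card
        ≤ (Fintype.piFinset (fun _ : Fin (V.card - 2) => V)).card := key
      _ = V.card ^ (V.card - 2) := by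
          simp [Fintype.card_piFinset, Finset.prod_const]

end ECC

/-- The type of edges of the complete graph on `Fin n`. -/
def EdgeIdx (n : ℕ) := {e : Sym2 (Fin n) // ¬ e.IsDiag}

/-- The edge joining two distinct vertices. -/
def mkEdge {n : ℕ} (i j : Fin n) (h : i ≠ j) : EdgeIdx n :=
  ⟨s(i, j), by simpa [Sym2.mk_isDiag_iff] using h⟩

/-- The random graph `G_{X,p}` at sample point `ω`: `{i,j}` is an edge iff `X_{{i,j}} ω ≤ p`. -/
def graphOf {n : ℕ} {Ω : Type*} (X : EdgeIdx n → Ω → ℝ) (p : ℝ) (ω : Ω) :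
    SimpleGraph (Fin n) where
  Adj i j := ∃ h : i ≠ j, X (mkEdge i j h) ω ≤ p
  symm := by
    constructor
    rintro i j ⟨h, hx⟩
    refine ⟨h.symm, ?_⟩
    have : mkEdge j i h.symm = mkEdge i j h := Subtype.ext (Sym2.eq_swap)
    rwa [this]
  loopless := by constructor; rintro i ⟨h, -⟩; exact h rfl

/-- The number of connected components of order `k`. -/
noncomputable def numComponents {n : ℕ} {Ω : Type*} (X : EdgeIdx n → Ω → ℝ) (p : ℝ)
    (k : ℕ) (ω : Ω) : ℕ :=
  Nat.card {c : (graphOf X p ω).ConnectedComponent // Nat.card c.supp = k}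

namespace ECC

lemma sym2_eq_of_mem {α : Type*} {e : Sym2 α} {x y : α} (hx : x ∈ e) (hy : y ∈ e)
    (hxy : x ≠ y) : e = s(x,y) := by
  induction e with
  | _ a b =>
    rw [Sym2.mem_iff] at hx hy
    rw [Sym2.eq_iff]
    rcases hx with rfl | rfl
    · rcases hy with rfl | rfl
      · exact absurd rfl hxy
      · exact Or.inl ⟨rfl, rfl⟩
    · rcases hy with rfl | rfl
      · exact Or.inr ⟨rfl, rfl⟩
      · exact absurd rfl hxy

section SpanningExists

variable {α : Type*} [DecidableEq α]

lemma exists_cross {E0 : Finset (Sym2 α)} {U : Finset α} :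
    ∀ {x y : α}, (SimpleGraph.fromEdgeSet (E0 : Set (Sym2 α))).Walk x y →
      x ∈ U → y ∉ U → ∃ a ∈ U, ∃ b, b ∉ U ∧ s(a,b) ∈ E0 := by
  intro x y w
  induction w with
  | nil => intro hx hy; exact absurd hx hy
  | cons hadj w' ih =>
    rename_i x' z' y'
    intro hx hy
    by_cases hz : z' ∈ U
    · exact ih hz hy
    · rw [SimpleGraph.fromEdgeSet_adj] at hadj
      exact ⟨x', hx, z', hz, hadj.1⟩

lemma exists_sptree_aux (W : Finset α) (E0 : Finset (Sym2 α))
    (hsub : ∀ e ∈ E0, ∀ x ∈ e, x ∈ W) (hnd : ∀ e ∈ E0, ¬ e.IsDiag)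
    (hconn : ∀ u ∈ W, ∀ v ∈ W, (SimpleGraph.fromEdgeSet (E0 : Set (Sym2 α))).Reachable u v)
    (v0 : α) (hv0 : v0 ∈ W) :
    ∀ j : ℕ, j + 1 ≤ W.card → ∃ U F, U ⊆ W ∧ F ⊆ E0 ∧ U.card = j + 1 ∧ IsSpTree U F := by
  intro j
  induction j with
  | zero =>
    intro _
    refine ⟨{v0}, ∅, Finset.singleton_subset_iff.2 hv0, Finset.empty_subset _, by simp,
      by simp, by simp, by simp, ?_⟩
    intro u hu v hv
    rw [Finset.mem_singleton] at hu hv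
    subst hu; subst hv
    exact SimpleGraph.Reachable.refl _
  | succ j ih =>
    intro hj
    obtain ⟨U, F, hUW, hFE, hcard, hsp⟩ := ih (by omega)
    have hWU : ∃ w ∈ W, w ∉ U := by
      by_contra hcon
      push_neg at hcon
      have := Finset.card_le_card (fun x hx => hcon x hx)
      omega
    obtain ⟨w, hwW, hwU⟩ := hWU
    obtain ⟨u0, hu0⟩ := Finset.card_pos.1 (show 0 < U.card by omega)
    obtain ⟨wk⟩ := hconn u0 (hUW hu0) w hwW
    obtain ⟨aa, haU, bb, hbU, habE⟩ := exists_cross wk hu0 hwU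
    have hbW : bb ∈ W := hsub _ habE bb (by simp)
    have hab : aa ≠ bb := by
      intro h
      exact hnd _ habE (by simp [Sym2.mk_isDiag_iff, h])
    have hnewE : s(aa,bb) ∉ F := by
      intro hmem
      exact hbU (hsp.1 _ hmem bb (by simp))
    refine ⟨insert bb U, insert s(aa,bb) F, ?_, ?_, ?_, ?_, ?_, ?_, ?_⟩
    · exact Finset.insert_subset hbW hUW
    · exact Finset.insert_subset habE hFE
    · rw [Finset.card_insert_of_notMem hbU, hcard]
    · intro e he x hx
      rcases Finset.mem_insert.1 he with rfl | he
      · rcases Sym2.mem_iff.1 hx with rfl | rfl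
        · exact Finset.mem_insert_of_mem haU
        · exact Finset.mem_insert_self _ _
      · exact Finset.mem_insert_of_mem (hsp.1 _ he x hx)
    · intro e he
      rcases Finset.mem_insert.1 he with rfl | he
      · exact hnd _ habE
      · exact hsp.2.1 _ he
    · rw [Finset.card_insert_of_notMem hnewE, Finset.card_insert_of_notMem hbU,
        hsp.2.2.1]
    · -- connectivity
      have hmono : SimpleGraph.fromEdgeSet ((F : Finset (Sym2 α)) : Set (Sym2 α)) ≤
          SimpleGraph.fromEdgeSet ((insert s(aa,bb) F : Finset (Sym2 α)) : Set (Sym2 α)) := by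
        apply SimpleGraph.fromEdgeSet_mono
        intro e he
        exact Finset.mem_coe.2 (Finset.mem_insert_of_mem (Finset.mem_coe.1 he))
      have hadjab : (SimpleGraph.fromEdgeSet
          ((insert s(aa,bb) F : Finset (Sym2 α)) : Set (Sym2 α))).Adj aa bb := by
        rw [SimpleGraph.fromEdgeSet_adj]
        exact ⟨Finset.mem_coe.2 (Finset.mem_insert_self _ _), hab⟩
      have hreach : ∀ x ∈ insert bb U, (SimpleGraph.fromEdgeSet
          ((insert s(aa,bb) F : Finset (Sym2 α)) : Set (Sym2 α))).Reachable x aa := by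
        intro x hx
        rcases Finset.mem_insert.1 hx with rfl | hx
        · exact hadjab.symm.reachable
        · exact SimpleGraph.Reachable.mono hmono (hsp.2.2.2 x hx aa haU)
      intro x hx y hy
      exact (hreach x hx).trans (hreach y hy).symm

lemma component_sptree (G : SimpleGraph α) [Fintype α] (W : Finset α)
    (hcl : ∀ a ∈ W, ∀ b, G.Adj a b → b ∈ W)
    (hco : ∀ u ∈ W, ∀ v ∈ W, G.Reachable u v)
    (hne : W.Nonempty) :
    ∃ F : Finset (Sym2 α), IsSpTree W F ∧ ∀ e ∈ F, e ∈ G.edgeSet := by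
  classical
  set E0 : Finset (Sym2 α) :=
    Finset.univ.filter (fun e => e ∈ G.edgeSet ∧ ∀ x ∈ e, x ∈ W) with hE0
  have hsub : ∀ e ∈ E0, ∀ x ∈ e, x ∈ W := by
    intro e he
    exact ((Finset.mem_filter.1 he).2).2
  have hndE : ∀ e ∈ E0, ¬ e.IsDiag := by
    intro e he
    exact SimpleGraph.not_isDiag_of_mem_edgeSet G ((Finset.mem_filter.1 he).2).1
  have hconn : ∀ u ∈ W, ∀ v ∈ W,
      (SimpleGraph.fromEdgeSet (E0 : Set (Sym2 α))).Reachable u v := by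
    have key : ∀ x y : α, G.Walk x y → x ∈ W →
        (SimpleGraph.fromEdgeSet (E0 : Set (Sym2 α))).Reachable x y := by
      intro x y w
      induction w with
      | nil => intro _; exact SimpleGraph.Reachable.refl _
      | cons hadj w' ih =>
        rename_i x' z' y'
        intro hx
        have hz : z' ∈ W := hcl x' hx z' hadj
        refine SimpleGraph.Reachable.trans ?_ (ih hz)
        have : s(x', z') ∈ E0 := by
          rw [hE0, Finset.mem_filter]
          refine ⟨Finset.mem_univ _, hadj, ?_⟩
          intro t ht
          rcases Sym2.mem_iff.1 ht with rfl | rfl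
          · exact hx
          · exact hz
        have hadj' : (SimpleGraph.fromEdgeSet (E0 : Set (Sym2 α))).Adj x' z' := by
          rw [SimpleGraph.fromEdgeSet_adj]
          exact ⟨Finset.mem_coe.2 this, hadj.ne⟩
        exact hadj'.reachable
    intro u hu v hv
    obtain ⟨w⟩ := hco u hu v hv
    exact key u v w hu
  obtain ⟨v0, hv0⟩ := hne
  obtain ⟨U, F, hUW, hFE, hUcard, hsp⟩ := exists_sptree_aux W E0 hsub hndE hconn v0 hv0
    (W.card - 1) (by have := Finset.card_pos.2 ⟨v0, hv0⟩; omega)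
  have hUW' : U = W := by
    apply Finset.eq_of_subset_of_card_le hUW
    have := Finset.card_pos.2 ⟨v0, hv0⟩
    omega
  subst hUW'
  exact ⟨F, hsp, fun e he => ((Finset.mem_filter.1 (hFE he)).2).1⟩

end SpanningExists

instance (n : ℕ) : DecidableEq (EdgeIdx n) := by unfold EdgeIdx; infer_instance
instance (n : ℕ) : Fintype (EdgeIdx n) := by unfold EdgeIdx; infer_instance

open Classical in
noncomputable def bdryIdx (n : ℕ) (V : Finset (Fin n)) : Finset (EdgeIdx n) :=
  Finset.univ.filter (fun e => (∃ x ∈ e.1, x ∈ V) ∧ (∃ y ∈ e.1, y ∉ V))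

open Classical in
noncomputable def treeIdx (n : ℕ) (E : Finset (Sym2 (Fin n))) : Finset (EdgeIdx n) :=
  Finset.univ.filter (fun e => e.1 ∈ E)

open Classical in
noncomputable def certs (n k : ℕ) : Finset (Finset (Fin n) × Finset (Sym2 (Fin n))) :=
  Finset.univ.filter (fun q => q.1.card = k ∧ IsSpTree q.1 q.2)

def Ev {n : ℕ} {Ω : Type*} (X : EdgeIdx n → Ω → ℝ) (p : ℝ)
    (q : Finset (Fin n) × Finset (Sym2 (Fin n))) : Set Ω :=
  {ω | (∀ s ∈ bdryIdx n q.1, p < X s ω) ∧ (∀ t ∈ treeIdx n q.2, X t ω ≤ p)}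

lemma card_bdryIdx (n : ℕ) (V : Finset (Fin n)) :
    (bdryIdx n V).card = V.card * (Finset.univ \ V).card := by
  classical
  rw [← Finset.card_product]
  symm
  apply Finset.card_bij
    (i := fun q (hq : q ∈ (V ×ˢ (Finset.univ \ V))) =>
      (⟨s(q.1, q.2), by
        have h1 : q.1 ∈ V := (Finset.mem_product.1 hq).1
        have h2 : q.2 ∉ V := (Finset.mem_sdiff.1 (Finset.mem_product.1 hq).2).2
        simp only [Sym2.mk_isDiag_iff]
        intro h
        exact h2 (h ▸ h1)⟩ : EdgeIdx n))
  · intro q hq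
    obtain ⟨x0, y0⟩ := q
    have h1 : x0 ∈ V := (Finset.mem_product.1 hq).1
    have h2 : y0 ∉ V := (Finset.mem_sdiff.1 (Finset.mem_product.1 hq).2).2
    rw [bdryIdx]
    exact Finset.mem_filter.2 ⟨Finset.mem_univ _, ⟨x0, by simp, h1⟩, ⟨y0, by simp, h2⟩⟩
  · intro q hq q' hq' heq
    have h1 : q.1 ∈ V := (Finset.mem_product.1 hq).1
    have h2 : q.2 ∉ V := (Finset.mem_sdiff.1 (Finset.mem_product.1 hq).2).2
    have h1' : q'.1 ∈ V := (Finset.mem_product.1 hq').1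
    have h2' : q'.2 ∉ V := (Finset.mem_sdiff.1 (Finset.mem_product.1 hq').2).2
    have := congrArg Subtype.val heq
    simp only at this
    rw [Sym2.eq_iff] at this
    rcases this with ⟨ha, hb⟩ | ⟨ha, hb⟩
    · exact Prod.ext ha hb
    · exact absurd (ha ▸ h1) h2'
  · rintro ⟨e, hnd⟩ he
    rw [bdryIdx] at he
    obtain ⟨-, ⟨x, hxe, hxV⟩, ⟨y, hye, hyV⟩⟩ := Finset.mem_filter.1 he
    have hxy : x ≠ y := by rintro rfl; exact hyV hxV
    have hexy : e = s(x,y) := sym2_eq_of_mem hxe hye hxy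
    refine ⟨(x, y), Finset.mem_product.2 ⟨hxV, Finset.mem_sdiff.2 ⟨Finset.mem_univ _, hyV⟩⟩, ?_⟩
    exact Subtype.ext hexy.symm

lemma card_treeIdx (n : ℕ) (E : Finset (Sym2 (Fin n))) (hnd : ∀ e ∈ E, ¬ e.IsDiag) :
    (treeIdx n E).card = E.card := by
  classical
  apply Finset.card_bij (i := fun (e : EdgeIdx n) (_ : e ∈ treeIdx n E) => e.1)
  · intro e he
    exact (Finset.mem_filter.1 he).2
  · intro e he e' he' heq
    exact Subtype.ext heq
  · intro e he
    exact ⟨⟨e, hnd e he⟩, Finset.mem_filter.2 ⟨Finset.mem_univ _, he⟩, rfl⟩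

lemma disjoint_bdry_tree (n : ℕ) (V : Finset (Fin n)) (E : Finset (Sym2 (Fin n)))
    (hsub : ∀ e ∈ E, ∀ x ∈ e, x ∈ V) :
    Disjoint (bdryIdx n V) (treeIdx n E) := by
  rw [Finset.disjoint_left]
  intro e heb het
  rw [bdryIdx, Finset.mem_filter] at heb
  rw [treeIdx, Finset.mem_filter] at het
  obtain ⟨-, -, ⟨y, hye, hyV⟩⟩ := heb
  exact hyV (hsub _ het.2 y hye)

lemma graphOf_edge_le {n : ℕ} {Ω : Type*} (X : EdgeIdx n → Ω → ℝ) (p : ℝ) (ω : Ω)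
    (e : EdgeIdx n) (he : e.1 ∈ (graphOf X p ω).edgeSet) : X e ω ≤ p := by
  obtain ⟨e, hnd⟩ := e
  revert hnd he
  induction e with
  | _ x y =>
    intro hnd he
    rw [SimpleGraph.mem_edgeSet] at he
    obtain ⟨hxy, hle⟩ := he
    have : mkEdge x y hxy = ⟨s(x,y), hnd⟩ := Subtype.ext rfl
    rwa [this] at hle

lemma graphOf_adj_of_le {n : ℕ} {Ω : Type*} (X : EdgeIdx n → Ω → ℝ) (p : ℝ) (ω : Ω)
    (e : EdgeIdx n) (hle : X e ω ≤ p) {x y : Fin n} (hexy : e.1 = s(x,y)) :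
    (graphOf X p ω).Adj x y := by
  have hxy : x ≠ y := by
    intro h
    exact e.2 (by rw [hexy, h]; simp)
  refine ⟨hxy, ?_⟩
  have : mkEdge x y hxy = e := Subtype.ext hexy.symm
  rwa [this]

lemma numComponents_le_sum_indicator {n : ℕ} {Ω : Type*} (X : EdgeIdx n → Ω → ℝ) (p : ℝ)
    (k : ℕ) (hk : 1 ≤ k) (ω : Ω) :
    (numComponents X p k ω : ℝ) ≤
      ∑ q ∈ certs n k, (Ev X p q).indicator (fun _ => (1:ℝ)) ω := by
  classical
  set D := (certs n k).filter (fun q => ω ∈ Ev X p q) with hD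
  have hstep1 : (D.card : ℝ) ≤ ∑ q ∈ certs n k, (Ev X p q).indicator (fun _ => (1:ℝ)) ω := by
    have hceq : (D.card : ℝ) = ∑ q ∈ D, (Ev X p q).indicator (fun _ => (1:ℝ)) ω := by
      rw [Finset.card_eq_sum_ones]
      push_cast
      apply Finset.sum_congr rfl
      intro q hq
      rw [hD, Finset.mem_filter] at hq
      rw [Set.indicator_of_mem hq.2]
    rw [hceq]
    apply Finset.sum_le_sum_of_subset_of_nonneg (Finset.filter_subset _ _)
    intro q _ _
    exact Set.indicator_nonneg (fun _ _ => zero_le_one) _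
  refine le_trans ?_ hstep1
  rw [Nat.cast_le]
  show numComponents X p k ω ≤ D.card
  rw [numComponents]
  rw [show D.card = Nat.card ↥D by rw [Nat.card_eq_fintype_card, Fintype.card_coe]]
  set G := graphOf X p ω with hG
  have hex : ∀ c : {c : G.ConnectedComponent // Nat.card c.supp = k},
      ∃ q : Finset (Fin n) × Finset (Sym2 (Fin n)),
        q ∈ D ∧ (q.1 : Set (Fin n)) = c.1.supp := by
    rintro ⟨c, hc⟩
    have hfin : c.supp.Finite := Set.toFinite _
    set W := hfin.toFinset with hW
    have hWs : (W : Set (Fin n)) = c.supp := Set.Finite.coe_toFinset hfin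
    have hWcard : W.card = k := by
      rw [← hc, Nat.card_coe_set_eq, ← hWs, Set.ncard_coe_finset]
    have hWmem : ∀ x, x ∈ W ↔ G.connectedComponentMk x = c := by
      intro x
      rw [← Finset.mem_coe, hWs]
      exact SimpleGraph.ConnectedComponent.mem_supp_iff c x
    have hcl : ∀ x ∈ W, ∀ y, G.Adj x y → y ∈ W := by
      intro x hx y hadj
      rw [hWmem] at hx ⊢
      rw [← hx]
      exact SimpleGraph.ConnectedComponent.sound hadj.symm.reachable
    have hco : ∀ u ∈ W, ∀ v ∈ W, G.Reachable u v := by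
      intro u hu v hv
      rw [hWmem] at hu hv
      exact SimpleGraph.ConnectedComponent.exact (hu.trans hv.symm)
    have hne : W.Nonempty := Finset.card_pos.1 (by omega)
    obtain ⟨F, hsp, hFE⟩ := component_sptree G W hcl hco hne
    refine ⟨(W, F), ?_, hWs⟩
    rw [hD, Finset.mem_filter]
    refine ⟨?_, ?_, ?_⟩
    · rw [certs, Finset.mem_filter]
      exact ⟨Finset.mem_univ _, hWcard, hsp⟩
    · -- boundary edges are closed
      intro s hs
      rw [bdryIdx, Finset.mem_filter] at hs
      obtain ⟨-, ⟨x, hxe, hxV⟩, ⟨y, hye, hyV⟩⟩ := hs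
      by_contra hcon
      push_neg at hcon
      have hxy : x ≠ y := by rintro rfl; exact hyV hxV
      have hexy : s.1 = s(x,y) := sym2_eq_of_mem hxe hye hxy
      have hadj : G.Adj x y := graphOf_adj_of_le X p ω s hcon hexy
      exact hyV (hcl x hxV y hadj)
    · intro t ht
      rw [treeIdx, Finset.mem_filter] at ht
      exact graphOf_edge_le X p ω t (hFE _ ht.2)
  choose f hfD hfV using hex
  apply Nat.card_le_card_of_injective (fun c => (⟨f c, hfD c⟩ : ↥D))
  intro c c' hcc
  have hfeq : f c = f c' := congrArg Subtype.val hcc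
  have hVeq : ((f c).1 : Set (Fin n)) = ((f c').1 : Set (Fin n)) := by rw [hfeq]
  rw [hfV c, hfV c'] at hVeq
  obtain ⟨v, hv⟩ := c.1.exists_rep
  have hv1 : v ∈ c.1.supp := hv
  have hv2 : v ∈ c'.1.supp := hVeq ▸ hv1
  apply Subtype.ext
  rw [← hv1, ← hv2]

end ECC

namespace ECC

lemma card_certs_le (n k : ℕ) : (certs n k).card ≤ n.choose k * k ^ (k - 2) := by
  classical
  have hsub : certs n k ⊆ (Finset.univ.powersetCard k).biUnion
      (fun V => (Finset.univ.filter (fun E => IsSpTree V E)).image (fun E => (V, E))) := by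
    intro q hq
    rw [certs, Finset.mem_filter] at hq
    obtain ⟨-, hcard, hsp⟩ := hq
    rw [Finset.mem_biUnion]
    refine ⟨q.1, ?_, ?_⟩
    · rw [Finset.mem_powersetCard]
      exact ⟨Finset.subset_univ _, hcard⟩
    · rw [Finset.mem_image]
      exact ⟨q.2, Finset.mem_filter.2 ⟨Finset.mem_univ _, hsp⟩, rfl⟩
  calc (certs n k).card ≤ _ := Finset.card_le_card hsub
    _ ≤ ∑ V ∈ Finset.univ.powersetCard k,
        ((Finset.univ.filter (fun E => IsSpTree V E)).image (fun E => (V, E))).card :=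
      Finset.card_biUnion_le
    _ ≤ ∑ _V ∈ Finset.univ.powersetCard k, k ^ (k-2) := by
        apply Finset.sum_le_sum
        intro V hV
        have hVk : V.card = k := (Finset.mem_powersetCard.1 hV).2
        calc ((Finset.univ.filter (fun E => IsSpTree V E)).image (fun E => (V, E))).card
            ≤ (Finset.univ.filter (fun E => IsSpTree V E)).card := Finset.card_image_le
          _ ≤ V.card ^ (V.card - 2) := card_spTrees_le V
          _ = k ^ (k-2) := by rw [hVk]
    _ = (Finset.univ.powersetCard k : Finset (Finset (Fin n))).card * k^(k-2) := by
        rw [Finset.sum_const, smul_eq_mul]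
    _ ≤ n.choose k * k^(k-2) := by
        rw [Finset.card_powersetCard, Finset.card_univ, Fintype.card_fin]

end ECC

theorem expected_components_of_order_k {Ω : Type*} [MeasurableSpace Ω]
    (μ : Measure Ω) [IsProbabilityMeasure μ] (n : ℕ) (hn : 2 ≤ n)
    (X : EdgeIdx n → Ω → ℝ)
    (hmeas : ∀ e, Measurable (X e))
    (hnonneg : ∀ e ω, 0 ≤ X e ω)
    (a b M σ : ℝ) (ha : 0 < a) (hb : 0 < b) (hM : 0 < M) (hσ : 0 < σ)
    (hST : ∀ (S T : Finset (EdgeIdx n)), Disjoint S T → ∀ p : ℝ, 0 < p →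
      μ {ω | (∀ s ∈ S, p < X s ω) ∧ (∀ t ∈ T, X t ω ≤ p)} ≤
        ENNReal.ofReal (Real.exp (-a * p * S.card / M) * (b * p / σ) ^ T.card))
    (p : ℝ) (hp : 0 < p) (k : ℕ) (hk : 1 ≤ k) (hkn : k ≤ n) :
    ∫ ω, (numComponents X p k ω : ℝ) ∂μ ≤
      (n.choose k : ℝ) * (k : ℝ) ^ (k - 2) *
        Real.exp (-a * p * k * (n - k) / M) * (b * p / σ) ^ (k - 1) := by
  classical
  have hbp : 0 < b * p / σ := div_pos (mul_pos hb hp) hσ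
  set B : ℝ := Real.exp (-a * p * k * ((n : ℝ) - k) / M) * (b * p / σ) ^ (k - 1) with hB
  have hBnn : 0 ≤ B := le_of_lt (mul_pos (Real.exp_pos _) (pow_pos hbp _))
  have hmeasEv : ∀ q, MeasurableSet (ECC.Ev X p q) := by
    intro q
    have h1 : {ω | ∀ s ∈ ECC.bdryIdx n q.1, p < X s ω} =
        ⋂ s ∈ ((ECC.bdryIdx n q.1 : Finset (EdgeIdx n)) : Set (EdgeIdx n)),
          {ω | p < X s ω} := by ext; simp
    have h2 : {ω | ∀ t ∈ ECC.treeIdx n q.2, X t ω ≤ p} =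
        ⋂ t ∈ ((ECC.treeIdx n q.2 : Finset (EdgeIdx n)) : Set (EdgeIdx n)),
          {ω | X t ω ≤ p} := by ext; simp
    have hm1 : MeasurableSet {ω | ∀ s ∈ ECC.bdryIdx n q.1, p < X s ω} := by
      rw [h1]
      exact MeasurableSet.biInter (Finset.countable_toSet _)
        (fun s _ => measurableSet_lt measurable_const (hmeas s))
    have hm2 : MeasurableSet {ω | ∀ t ∈ ECC.treeIdx n q.2, X t ω ≤ p} := by
      rw [h2]
      exact MeasurableSet.biInter (Finset.countable_toSet _)
        (fun t _ => measurableSet_le (hmeas t) measurable_const)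
    exact hm1.inter hm2
  have hint : ∀ q ∈ ECC.certs n k,
      Integrable (fun ω => (ECC.Ev X p q).indicator (fun _ => (1:ℝ)) ω) μ :=
    fun q _ => (integrable_const (1:ℝ)).indicator (hmeasEv q)
  have h1 : ∫ ω, (numComponents X p k ω : ℝ) ∂μ ≤
      ∫ ω, ∑ q ∈ ECC.certs n k, (ECC.Ev X p q).indicator (fun _ => (1:ℝ)) ω ∂μ := by
    apply integral_mono_of_nonneg
    · exact Filter.Eventually.of_forall (fun ω => Nat.cast_nonneg _)
    · exact integrable_finset_sum _ hint
    · exact Filter.Eventually.of_forall (fun ω => ECC.numComponents_le_sum_indicator X p k hk ω)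
  rw [integral_finset_sum _ hint] at h1
  have h2 : ∀ q ∈ ECC.certs n k,
      (∫ ω, (ECC.Ev X p q).indicator (fun _ => (1:ℝ)) ω ∂μ) = (μ (ECC.Ev X p q)).toReal := by
    intro q _
    rw [integral_indicator_const _ (hmeasEv q), smul_eq_mul, mul_one, measureReal_def]
  rw [Finset.sum_congr rfl h2] at h1
  have h3 : ∀ q ∈ ECC.certs n k, (μ (ECC.Ev X p q)).toReal ≤ B := by
    intro q hq
    rw [ECC.certs, Finset.mem_filter] at hq
    obtain ⟨-, hcard, hsp⟩ := hq
    have hSc : (ECC.bdryIdx n q.1).card = k * (n - k) := by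
      rw [ECC.card_bdryIdx, hcard, Finset.card_sdiff_of_subset (Finset.subset_univ _),
        Finset.card_univ, Fintype.card_fin, hcard]
    have hTc : (ECC.treeIdx n q.2).card = k - 1 := by
      rw [ECC.card_treeIdx n q.2 hsp.2.1]
      have := hsp.2.2.1
      omega
    have hST' := hST (ECC.bdryIdx n q.1) (ECC.treeIdx n q.2)
      (ECC.disjoint_bdry_tree n q.1 q.2 hsp.1) p hp
    rw [hSc, hTc] at hST'
    have hcast : ((k * (n - k) : ℕ) : ℝ) = (k : ℝ) * ((n : ℝ) - (k : ℝ)) := by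
      push_cast [Nat.cast_sub hkn]
      ring
    rw [hcast] at hST'
    have harg : -a * p * ((k : ℝ) * ((n : ℝ) - (k : ℝ))) / M
        = -a * p * (k : ℝ) * ((n : ℝ) - (k : ℝ)) / M := by ring
    rw [harg] at hST'
    rw [hB]
    exact ENNReal.toReal_le_of_le_ofReal (le_of_lt (mul_pos (Real.exp_pos _) (pow_pos hbp _))) hST'
  have h4 : ∑ q ∈ ECC.certs n k, (μ (ECC.Ev X p q)).toReal ≤ (ECC.certs n k).card • B :=
    Finset.sum_le_card_nsmul _ _ _ h3
  rw [nsmul_eq_mul] at h4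
  have h5 : ((ECC.certs n k).card : ℝ) ≤ ((n.choose k * k ^ (k-2) : ℕ) : ℝ) :=
    Nat.cast_le.2 (ECC.card_certs_le n k)
  have h6 : ((ECC.certs n k).card : ℝ) * B ≤ ((n.choose k * k ^ (k-2) : ℕ) : ℝ) * B :=
    mul_le_mul_of_nonneg_right h5 hBnn
  have h7 : ((n.choose k * k ^ (k-2) : ℕ) : ℝ) * B =
      (n.choose k : ℝ) * (k : ℝ) ^ (k - 2) *
        Real.exp (-a * p * k * (n - k) / M) * (b * p / σ) ^ (k - 1) := by
    rw [hB]
    push_cast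
    ring
  calc ∫ ω, (numComponents X p k ω : ℝ) ∂μ
      ≤ ∑ q ∈ ECC.certs n k, (μ (ECC.Ev X p q)).toReal := h1
    _ ≤ ((ECC.certs n k).card : ℝ) * B := h4
    _ ≤ ((n.choose k * k ^ (k-2) : ℕ) : ℝ) * B := h6
    _ = _ := h7
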